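/- (3-Heisenberg-Robertson-Schrödinger uncertainty principle on ℝⁿ.) Let n be a positive integer, let x ∈ ℝⁿ satisfy Σ_{j=1}^n x_j³ = 1, and let (a_j), (b_j), (c_j) be real n-tuples. Set a := Σ_j a_j x_j³, b := Σ_j b_j x_j³, c := Σ_j c_j x_j³, and Δ_A := (Σ_j |a_j x_j − a x_j|³)^{1/3}, Δ_B := (Σ_j |b_j x_j − b x_j|³)^{1/3}, Δ_C := (Σ_j |c_j x_j − c x_j|³)^{1/3}. Then (1/27)·(Δ_A + Δ_B + Δ_C)³ ≥ Δ_A·Δ_B·Δ_C ≥ | Σ_j (a_j b_j c_j − a·b_j c_j − b·a_j c_j − c·a_j b_j)·x_j³ + 2abc |. -/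

import Mathlib

open Finset

lemma holder3 {n : ℕ} (u v w : Fin n → ℝ) :
    |∑ j, u j * v j * w j| ≤
      (∑ j, |u j| ^ 3) ^ ((1:ℝ)/3) * (∑ j, |v j| ^ 3) ^ ((1:ℝ)/3)
        * (∑ j, |w j| ^ 3) ^ ((1:ℝ)/3) := by
  have hpq : Real.HolderConjugate 3 (3/2) := Real.holderConjugate_iff.mpr ⟨by norm_num, by norm_num⟩
  have h22 : Real.HolderConjugate 2 2 := Real.holderConjugate_iff.mpr ⟨by norm_num, by norm_num⟩
  set Su := ∑ j, |u j| ^ 3 with hSu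
  set Sv := ∑ j, |v j| ^ 3 with hSv
  set Sw := ∑ j, |w j| ^ 3 with hSw
  have hSu0 : 0 ≤ Su := sum_nonneg fun i _ => by positivity
  have hSv0 : 0 ≤ Sv := sum_nonneg fun i _ => by positivity
  have hSw0 : 0 ≤ Sw := sum_nonneg fun i _ => by positivity
  have step2 : ∑ j, (|v j| * |w j|) ^ ((3:ℝ)/2) ≤ Sv ^ ((1:ℝ)/2) * Sw ^ ((1:ℝ)/2) := by
    have := Real.inner_le_Lp_mul_Lq_of_nonneg (s := univ)
      (f := fun j => |v j| ^ ((3:ℝ)/2)) (g := fun j => |w j| ^ ((3:ℝ)/2)) h22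
      (fun i _ => by positivity) (fun i _ => by positivity)
    calc ∑ j, (|v j| * |w j|) ^ ((3:ℝ)/2)
        = ∑ j, |v j| ^ ((3:ℝ)/2) * |w j| ^ ((3:ℝ)/2) := by
          refine sum_congr rfl fun j _ => ?_
          rw [Real.mul_rpow (abs_nonneg _) (abs_nonneg _)]
      _ ≤ (∑ j, (|v j| ^ ((3:ℝ)/2)) ^ (2:ℝ)) ^ ((1:ℝ)/2)
            * (∑ j, (|w j| ^ ((3:ℝ)/2)) ^ (2:ℝ)) ^ ((1:ℝ)/2) := this
      _ = Sv ^ ((1:ℝ)/2) * Sw ^ ((1:ℝ)/2) := by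
          have key : ∀ t : ℝ, (|t| ^ ((3:ℝ)/2)) ^ (2:ℝ) = |t| ^ 3 := fun t => by
            rw [← Real.rpow_natCast |t| 3, ← Real.rpow_mul (abs_nonneg _)]; norm_num
          simp only [key, hSv, hSw]
  have keyu : ∀ t : ℝ, |t| ^ (3:ℝ) = |t| ^ 3 := fun t => by
    rw [← Real.rpow_natCast |t| 3]; norm_num
  have hS20 : (0:ℝ) ≤ ∑ j, (|v j| * |w j|) ^ ((3:ℝ)/2) :=
    sum_nonneg fun i _ => by positivity
  have h1 : |∑ j, u j * v j * w j| ≤ ∑ j, |u j| * (|v j| * |w j|) := by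
    refine (Finset.abs_sum_le_sum_abs _ _).trans_eq ?_
    refine sum_congr rfl fun j _ => ?_
    rw [abs_mul, abs_mul, mul_assoc]
  have h2 : ∑ j, |u j| * (|v j| * |w j|) ≤
      Su ^ ((1:ℝ)/3) * (∑ j, (|v j| * |w j|) ^ ((3:ℝ)/2)) ^ ((1:ℝ)/(3/2)) := by
    have := Real.inner_le_Lp_mul_Lq_of_nonneg (s := univ)
      (f := fun j => |u j|) (g := fun j => |v j| * |w j|) hpq
      (fun i _ => abs_nonneg _) (fun i _ => by positivity)
    simpa [keyu, hSu] using this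
  have h3 : (∑ j, (|v j| * |w j|) ^ ((3:ℝ)/2)) ^ ((1:ℝ)/(3/2)) ≤
      Sv ^ ((1:ℝ)/3) * Sw ^ ((1:ℝ)/3) := by
    have := Real.rpow_le_rpow hS20 step2 (by norm_num : (0:ℝ) ≤ (1:ℝ)/(3/2))
    refine this.trans_eq ?_
    rw [Real.mul_rpow (Real.rpow_nonneg hSv0 _) (Real.rpow_nonneg hSw0 _),
      ← Real.rpow_mul hSv0, ← Real.rpow_mul hSw0]
    norm_num
  calc |∑ j, u j * v j * w j| ≤ ∑ j, |u j| * (|v j| * |w j|) := h1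
    _ ≤ Su ^ ((1:ℝ)/3) * (∑ j, (|v j| * |w j|) ^ ((3:ℝ)/2)) ^ ((1:ℝ)/(3/2)) := h2
    _ ≤ Su ^ ((1:ℝ)/3) * (Sv ^ ((1:ℝ)/3) * Sw ^ ((1:ℝ)/3)) := by
        exact mul_le_mul_of_nonneg_left h3 (Real.rpow_nonneg hSu0 _)
    _ = Su ^ ((1:ℝ)/3) * Sv ^ ((1:ℝ)/3) * Sw ^ ((1:ℝ)/3) := by ring

/-- **3-Heisenberg–Robertson–Schrödinger uncertainty principle on `ℝⁿ`** (with the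
`ℓ³`-norm and 3-product `⟨x, y, z⟩ = Σ xⱼyⱼzⱼ`), for diagonal operators given by real
tuples `(aⱼ), (bⱼ), (cⱼ)` at a state `x` with `Σ xⱼ³ = 1`. -/
theorem Rn_three_operator_uncertainty
    (n : ℕ) (hn : 0 < n) (x A B C : Fin n → ℝ)
    (hx : ∑ j, (x j) ^ 3 = 1)
    (a b c : ℝ)
    (ha : a = ∑ j, A j * (x j) ^ 3)
    (hb : b = ∑ j, B j * (x j) ^ 3)
    (hc : c = ∑ j, C j * (x j) ^ 3)
    (ΔA ΔB ΔC : ℝ)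
    (hΔA : ΔA = (∑ j, |A j * x j - a * x j| ^ 3) ^ ((1 : ℝ) / 3))
    (hΔB : ΔB = (∑ j, |B j * x j - b * x j| ^ 3) ^ ((1 : ℝ) / 3))
    (hΔC : ΔC = (∑ j, |C j * x j - c * x j| ^ 3) ^ ((1 : ℝ) / 3)) :
    (1 / 27) * (ΔA + ΔB + ΔC) ^ 3 ≥ ΔA * ΔB * ΔC
    ∧ ΔA * ΔB * ΔC
      ≥ |(∑ j, (A j * B j * C j - a * (B j * C j) - b * (A j * C j) - c * (A j * B j))
            * (x j) ^ 3) + 2 * a * b * c| := by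
  have hA0 : 0 ≤ ΔA := hΔA ▸ Real.rpow_nonneg (sum_nonneg fun i _ => by positivity) _
  have hB0 : 0 ≤ ΔB := hΔB ▸ Real.rpow_nonneg (sum_nonneg fun i _ => by positivity) _
  have hC0 : 0 ≤ ΔC := hΔC ▸ Real.rpow_nonneg (sum_nonneg fun i _ => by positivity) _
  constructor
  · nlinarith [mul_nonneg hA0 (sq_nonneg (ΔB - ΔC)), mul_nonneg hB0 (sq_nonneg (ΔA - ΔC)),
      mul_nonneg hC0 (sq_nonneg (ΔA - ΔB)),
      mul_nonneg (add_nonneg (add_nonneg hA0 hB0) hC0)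
        (add_nonneg (add_nonneg (sq_nonneg (ΔA - ΔB)) (sq_nonneg (ΔB - ΔC))) (sq_nonneg (ΔA - ΔC)))]
  · have expand : ∑ j, (A j * x j - a * x j) * (B j * x j - b * x j) * (C j * x j - c * x j)
        = (∑ j, (A j * B j * C j - a * (B j * C j) - b * (A j * C j) - c * (A j * B j))
            * (x j) ^ 3) + 2 * a * b * c := by
      have e1 : ∀ j : Fin n,
          (A j * x j - a * x j) * (B j * x j - b * x j) * (C j * x j - c * x j)
          = (A j * B j * C j - a * (B j * C j) - b * (A j * C j) - c * (A j * B j)) * x j ^ 3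
            + ((a * b) * (C j * x j ^ 3) + (a * c) * (B j * x j ^ 3)
              + (b * c) * (A j * x j ^ 3) - (a * b * c) * x j ^ 3) := fun j => by ring
      rw [sum_congr rfl fun j _ => e1 j, Finset.sum_add_distrib]
      congr 1
      rw [Finset.sum_sub_distrib, Finset.sum_add_distrib, Finset.sum_add_distrib,
        ← Finset.mul_sum, ← Finset.mul_sum, ← Finset.mul_sum, ← Finset.mul_sum,
        ← ha, ← hb, ← hc, hx]
      ring
    rw [ge_iff_le, ← expand, hΔA, hΔB, hΔC]
    exact holder3 _ _ _
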